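/- Let C = {x} consist of a single colluding agent. Then: (a) the broadcast β*(x,t) = max(d(x,t) − 2, 1) for t ≠ x is admissible; and (b) every admissible broadcast β for C satisfies β(x,t) ≥ max(d(x,t) − 2, 1) for every t ≠ x. In this sense β* is the optimal (pointwise minimal) admissible strategy for a single lying agent. -/

import Mathlib

open SimpleGraph

namespace Intercept

variable {V : Type*}

/-- The perceived-distance vectors after `s` rounds of the synchronization protocol.
Colluding agents (members of `C`) always broadcast `β`; honest agents start with
`0`/`∞` and update by the distance-vector rule. -/
noncomputable def perceived [Fintype V] [DecidableEq V] (G : SimpleGraph V)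
    (C : Finset V) (β : V → V → ℕ∞) : ℕ → V → V → ℕ∞
  | 0 => fun i j => if i ∈ C then β i j else if i = j then 0 else ⊤
  | s + 1 => fun i j =>
      if i ∈ C then β i j
      else min (perceived G C β s i j)
        (1 + ⨅ k ∈ G.neighborSet i, perceived G C β s k j)

/-- The stationary perceived distances `ρ = ρ^n`. -/
noncomputable def rho [Fintype V] [DecidableEq V] (G : SimpleGraph V)
    (C : Finset V) (β : V → V → ℕ∞) : V → V → ℕ∞ :=
  perceived G C β (Fintype.card V)

/-- `k ∈ b(i,t)`:  `k` is a neighbor of `i` minimizing the (stationary) perceived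
distance `ρ(·,t)` among all neighbors of `i`; only defined (satisfiable) for `i ≠ t`. -/
def inForwardSet (G : SimpleGraph V) (ρ : V → V → ℕ∞) (i t k : V) : Prop :=
  i ≠ t ∧ G.Adj i k ∧ ∀ k', G.Adj i k' → ρ k t ≤ ρ k' t

/-- A corresponding path from `s` to `t`: a walk in `G` such that every honest vertex
forwards to a member of its forwarding set `b(·,t)`. -/
def IsCorrPath [Fintype V] [DecidableEq V] (G : SimpleGraph V) (C : Finset V)
    (β : V → V → ℕ∞) (s t : V) (ℓ : ℕ) (v : ℕ → V) : Prop :=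
  v 0 = s ∧ v ℓ = t ∧ (∀ i < ℓ, G.Adj (v i) (v (i + 1))) ∧
    ∀ i < ℓ, v i ∉ C → inForwardSet G (rho G C β) (v i) t (v (i + 1))

/-- A broadcast is admissible if between every ordered pair of distinct vertices
there is a corresponding path. -/
def Admissible [Fintype V] [DecidableEq V] (G : SimpleGraph V) (C : Finset V)
    (β : V → V → ℕ∞) : Prop :=
  ∀ s t : V, s ≠ t → ∃ ℓ v, IsCorrPath G C β s t ℓ v

/-- The pair `(s,t)` is captured if every corresponding path from `s` to `t`
contains a colluding vertex. -/
def Captured [Fintype V] [DecidableEq V] (G : SimpleGraph V) (C : Finset V)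
    (β : V → V → ℕ∞) (s t : V) : Prop :=
  ∀ ℓ v, IsCorrPath G C β s t ℓ v → ∃ i ≤ ℓ, v i ∈ C

/-- `N(C,β)`: the number of captured ordered pairs of distinct vertices. -/
noncomputable def numCaptured [Fintype V] [DecidableEq V] (G : SimpleGraph V)
    (C : Finset V) (β : V → V → ℕ∞) : ℕ :=
  Set.ncard {p : V × V | p.1 ≠ p.2 ∧ Captured G C β p.1 p.2}


/-- The broadcast in which each colluding agent independently lies by two:
`β*(c,t) = max (d(c,t) - 2) 1` for `t ≠ c`, and `β*(c,c) = 0`. -/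
noncomputable def betaStar [DecidableEq V] (G : SimpleGraph V) : V → V → ℕ∞ :=
  fun c t => if c = t then 0 else ((max (G.dist c t - 2) 1 : ℕ) : ℕ∞)


/-! ### Auxiliary development for `single_agent_optimal` -/

section Aux
variable [Fintype V] [DecidableEq V] {G : SimpleGraph V} {x : V} {β : V → V → ℕ∞} {t : V}

lemma perceived_x (s : ℕ) (j : V) : perceived G {x} β s x j = β x j := by
  cases s <;> simp [perceived]

lemma perceived_zero_honest {i j : V} (hi : i ≠ x) :
    perceived G {x} β 0 i j = if i = j then 0 else ⊤ := by
  simp [perceived, hi]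

lemma perceived_succ_honest {i j : V} (hi : i ≠ x) (s : ℕ) :
    perceived G {x} β (s + 1) i j =
      min (perceived G {x} β s i j) (1 + ⨅ k ∈ G.neighborSet i, perceived G {x} β s k j) := by
  simp [perceived, hi]

lemma perceived_self (s : ℕ) {i : V} (hi : i ≠ x) : perceived G {x} β s i i = 0 := by
  induction s with
  | zero => simp [perceived_zero_honest hi]
  | succ s ih => simp [perceived_succ_honest hi, ih]

lemma perceived_le_succ_nbr {i j k : V} (hi : i ≠ x) (hk : G.Adj i k) (s : ℕ) :
    perceived G {x} β (s + 1) i j ≤ 1 + perceived G {x} β s k j := by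
  rw [perceived_succ_honest hi]
  refine min_le_of_right_le ?_
  exact add_le_add_right (iInf₂_le k hk) 1


def Gx (G : SimpleGraph V) (x : V) : SimpleGraph V where
  Adj a b := G.Adj a b ∧ a ≠ x ∧ b ≠ x
  symm := ⟨fun a b (h : G.Adj a b ∧ a ≠ x ∧ b ≠ x) => ⟨h.1.symm, h.2.2, h.2.1⟩⟩
  loopless := ⟨fun a (h : G.Adj a a ∧ a ≠ x ∧ a ≠ x) => G.irrefl h.1⟩

noncomputable def gfun [DecidableEq V] (G : SimpleGraph V) (x : V) (β : V → V → ℕ∞) (t i : V) : ℕ∞ :=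
  if i = x then β x t else min ((Gx G x).edist i t) (G.edist i x + β x t)

variable [DecidableEq V] {G : SimpleGraph V} {x : V} {β : V → V → ℕ∞} {t : V}

lemma gfun_x : gfun G x β t x = β x t := by simp [gfun]

lemma gfun_honest {i : V} (hi : i ≠ x) :
    gfun G x β t i = min ((Gx G x).edist i t) (G.edist i x + β x t) := by simp [gfun, hi]

lemma gfun_lip {i k : V} (hi : i ≠ x) (hik : G.Adj i k) :
    gfun G x β t i ≤ 1 + gfun G x β t k := by
  rw [gfun_honest hi]
  by_cases hk : k = x
  · rw [hk, gfun_x]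
    refine min_le_of_right_le ?_
    have h1 : G.edist i x ≤ 1 := by
      rw [hk] at hik; rw [← edist_eq_one_iff_adj] at hik; exact hik.le
    exact add_le_add_left h1 _
  · rw [gfun_honest hk]
    have hA : (Gx G x).edist i t ≤ 1 + (Gx G x).edist k t := by
      have h1 : (Gx G x).edist i k ≤ 1 := by
        have : (Gx G x).Adj i k := ⟨hik, hi, hk⟩
        rw [← edist_eq_one_iff_adj] at this; exact this.le
      calc (Gx G x).edist i t ≤ (Gx G x).edist i k + (Gx G x).edist k t :=
            SimpleGraph.edist_triangle
        _ ≤ 1 + (Gx G x).edist k t := add_le_add_left h1 _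
    have hB : G.edist i x + β x t ≤ 1 + (G.edist k x + β x t) := by
      have h1 : G.edist i k ≤ 1 := by
        rw [← edist_eq_one_iff_adj] at hik; exact hik.le
      calc G.edist i x + β x t ≤ (G.edist i k + G.edist k x) + β x t :=
            add_le_add_left SimpleGraph.edist_triangle _
        _ ≤ (1 + G.edist k x) + β x t := add_le_add_left (add_le_add_left h1 _) _
        _ = 1 + (G.edist k x + β x t) := by ring
    rw [← min_add_add_left]
    exact le_min (min_le_of_left_le hA) (min_le_of_right_le hB)

lemma le_one_add_iInf {S : Set V} {f : V → ℕ∞} {a : ℕ∞}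
    (h : ∀ k ∈ S, a ≤ 1 + f k) : a ≤ 1 + ⨅ k ∈ S, f k := by
  rw [← tsub_le_iff_left, le_iInf₂_iff]
  intro k hk
  rw [tsub_le_iff_left]
  exact h k hk

lemma gfun_le_perceived [Fintype V] (s : ℕ) (i : V) :
    gfun G x β t i ≤ perceived G {x} β s i t := by
  induction s generalizing i with
  | zero =>
    by_cases hi : i = x
    · rw [hi, gfun_x, perceived_x]
    · rw [perceived_zero_honest hi]
      by_cases hit : i = t
      · subst hit
        rw [gfun_honest hi, SimpleGraph.edist_self]
        simp
      · simp [hit]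
  | succ s ih =>
    by_cases hi : i = x
    · rw [hi, gfun_x, perceived_x]
    · rw [perceived_succ_honest hi]
      refine le_min (ih i) ?_
      refine le_one_add_iInf ?_
      intro k hk
      exact (gfun_lip hi hk).trans (add_le_add_right (ih k) 1)

lemma perceived_le_of_walk_to_x [Fintype V] :
    ∀ {i w : V} (p : G.Walk i w) (s : ℕ), p.length ≤ s → w = x →
      perceived G {x} β s i t ≤ (p.length : ℕ∞) + β x t := by
  intro i w p
  induction p with
  | nil =>
    intro s _ hw
    rw [hw, perceived_x]
    simp
  | @cons a b c h q ih =>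
    intro s hs hw
    by_cases ha : a = x
    · rw [SimpleGraph.Walk.length_cons, ha, perceived_x]
      exact le_add_self
    · obtain ⟨s', rfl⟩ : ∃ s', s = s' + 1 := by
        cases s with
        | zero => simp at hs
        | succ n => exact ⟨n, rfl⟩
      have hq : q.length ≤ s' := by
        simpa [Nat.succ_le_succ_iff] using hs
      calc perceived G {x} β (s' + 1) a t ≤ 1 + perceived G {x} β s' b t :=
            perceived_le_succ_nbr ha h s'
        _ ≤ 1 + ((q.length : ℕ∞) + β x t) := add_le_add_right (ih s' hq hw) 1
        _ = (((Walk.cons h q).length : ℕ) : ℕ∞) + β x t := by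
            rw [SimpleGraph.Walk.length_cons]; push_cast; ring

lemma perceived_le_of_Gx_walk [Fintype V] :
    ∀ {i w : V} (p : (Gx G x).Walk i w) (s : ℕ), p.length ≤ s → i ≠ x → w = t →
      perceived G {x} β s i t ≤ (p.length : ℕ∞) := by
  intro i w p
  induction p with
  | nil =>
    intro s _ hi hw
    rw [← hw, perceived_self s hi]
    simp
  | @cons a b c h q ih =>
    intro s hs ha hw
    obtain ⟨s', rfl⟩ : ∃ s', s = s' + 1 := by
      cases s with
      | zero => simp at hs
      | succ n => exact ⟨n, rfl⟩
    have hq : q.length ≤ s' := by simpa [Nat.succ_le_succ_iff] using hs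
    have hb : b ≠ x := h.2.2
    calc perceived G {x} β (s' + 1) a t ≤ 1 + perceived G {x} β s' b t :=
          perceived_le_succ_nbr ha h.1 s'
      _ ≤ 1 + (q.length : ℕ∞) := add_le_add_right (ih s' hq hb hw) 1
      _ = (((Walk.cons h q).length : ℕ) : ℕ∞) := by
          rw [SimpleGraph.Walk.length_cons]; push_cast; ring

lemma edist_eq_coe_dist {G : SimpleGraph V} {u v : V} (h : G.Reachable u v) :
    G.edist u v = (G.dist u v : ℕ∞) := by
  obtain ⟨p, hp⟩ := h.exists_walk_length_eq_dist
  refine le_antisymm (hp ▸ SimpleGraph.edist_le p) ?_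
  have : G.edist u v ≠ ⊤ := SimpleGraph.edist_ne_top_iff_reachable.mpr h
  rw [SimpleGraph.dist, ENat.coe_toNat this]

lemma rho_eq [Fintype V] (hG : G.Connected) (i : V) :
    rho G {x} β i t = gfun G x β t i := by
  refine le_antisymm ?_ (gfun_le_perceived _ i)
  by_cases hi : i = x
  · rw [hi, gfun_x]
    exact le_of_eq (perceived_x _ _)
  · rw [gfun_honest hi]
    refine le_min ?_ ?_
    · by_cases hr : (Gx G x).Reachable i t
      · obtain ⟨p, hp, hl⟩ := hr.exists_path_of_dist
        have hcard : p.length ≤ Fintype.card V := hp.length_lt.le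
        have h2 := perceived_le_of_Gx_walk (β := β) p (Fintype.card V) hcard hi rfl
        rw [edist_eq_coe_dist hr, ← hl]
        exact h2
      · rw [SimpleGraph.edist_eq_top_of_not_reachable hr]
        exact le_top
    · obtain ⟨p, hp, hl⟩ := (hG i x).exists_path_of_dist
      have hcard : p.length ≤ Fintype.card V := hp.length_lt.le
      have h2 := perceived_le_of_walk_to_x (β := β) (t := t) p (Fintype.card V) hcard rfl
      rw [edist_eq_coe_dist (hG i x), ← hl]
      exact h2

lemma isCorrPath_nil {C : Finset V} : IsCorrPath G C β t t 0 (fun _ => t) :=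
  ⟨rfl, rfl, fun i hi => absurd hi (Nat.not_lt_zero i), fun i hi => absurd hi (Nat.not_lt_zero i)⟩

lemma isCorrPath_cons {C : Finset V} {s k : V} {ℓ : ℕ} {v : ℕ → V} (h1 : G.Adj s k)
    (h2 : s ∉ C → inForwardSet G (rho G C β) s t k)
    (hp : IsCorrPath G C β k t ℓ v) :
    IsCorrPath G C β s t (ℓ + 1) (fun n => Nat.casesOn n s v) := by
  obtain ⟨h0, hl, ha, hf⟩ := hp
  refine ⟨rfl, hl, ?_, ?_⟩
  · intro i hi
    cases i with
    | zero => show G.Adj s (v 0); rw [h0]; exact h1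
    | succ j => exact ha j (by omega)
  · intro i hi hC
    cases i with
    | zero => show inForwardSet G _ s t (v 0); rw [h0]; exact h2 hC
    | succ j => exact hf j (by omega) hC

lemma forward_of_succ_le (hG : G.Connected) {i k : V} (hi : i ≠ x) (hit : i ≠ t)
    (hik : G.Adj i k) (h : gfun G x β t k + 1 ≤ gfun G x β t i) :
    inForwardSet G (rho G {x} β) i t k := by
  refine ⟨hit, hik, fun k' hk' => ?_⟩
  rw [rho_eq hG k, rho_eq hG k']
  have h2 : gfun G x β t i ≤ gfun G x β t k' + 1 :=
    (gfun_lip hi hk').trans (le_of_eq (add_comm _ _))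
  exact (WithTop.add_le_add_iff_right (by simp : (1:ℕ∞) ≠ ⊤)).mp (h.trans h2)

lemma corr_of_Gx (hG : G.Connected) :
    ∀ n : ℕ, ∀ i : V, i ≠ x → (Gx G x).edist i t ≤ (n : ℕ∞) →
      (Gx G x).edist i t ≤ G.edist i x + β x t →
      ∃ ℓ v, IsCorrPath G {x} β i t ℓ v := by
  intro n
  induction n with
  | zero =>
    intro i hi h0 _
    have h1 : (Gx G x).edist i t = 0 := le_antisymm (by simpa using h0) zero_le
    have hit : i = t := by rwa [SimpleGraph.edist_eq_zero_iff] at h1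
    subst hit
    exact ⟨0, _, isCorrPath_nil⟩
  | succ n ih =>
    intro i hi hn hx
    by_cases hit : i = t
    · subst hit; exact ⟨0, _, isCorrPath_nil⟩
    have hne : (Gx G x).edist i t ≠ ⊤ :=
      ne_top_of_le_ne_top (ENat.coe_ne_top _) hn
    have hr : (Gx G x).Reachable i t := SimpleGraph.reachable_of_edist_ne_top hne
    obtain ⟨p, hp⟩ := hr.exists_walk_length_eq_edist
    cases p with
    | nil => exact absurd rfl hit
    | @cons a b c h q =>
      have hb : b ≠ x := h.2.2
      have hlen : ((q.length : ℕ∞) + 1) = (Gx G x).edist i t := by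
        rw [← hp, SimpleGraph.Walk.length_cons]; push_cast; ring
      have hqk : (Gx G x).edist b t ≤ (q.length : ℕ∞) := SimpleGraph.edist_le q
      have hkt1 : (Gx G x).edist b t + 1 ≤ (Gx G x).edist i t := by
        rw [← hlen]; exact add_le_add_left hqk 1
      have hgi : gfun G x β t i = (Gx G x).edist i t := by
        rw [gfun_honest hi]; exact min_eq_left hx
      have hgk : gfun G x β t b ≤ (Gx G x).edist b t := by
        rw [gfun_honest hb]; exact min_le_left _ _
      have hfw := forward_of_succ_le hG hi hit h.1
        (by rw [hgi]; exact (add_le_add_left hgk 1).trans hkt1)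
      have hxk : (Gx G x).edist b t ≤ G.edist b x + β x t := by
        have h1 : G.edist i b ≤ 1 :=
          le_of_eq (SimpleGraph.edist_eq_one_iff_adj.mpr h.1)
        have h3 : G.edist i x ≤ 1 + G.edist b x :=
          calc G.edist i x ≤ G.edist i b + G.edist b x := SimpleGraph.edist_triangle
            _ ≤ 1 + G.edist b x := add_le_add_left h1 _
        have h4 : (Gx G x).edist b t + 1 ≤ (G.edist b x + β x t) + 1 :=
          calc (Gx G x).edist b t + 1 ≤ (Gx G x).edist i t := hkt1
            _ ≤ G.edist i x + β x t := hx
            _ ≤ (1 + G.edist b x) + β x t := add_le_add_left h3 _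
            _ = (G.edist b x + β x t) + 1 := by ring
        exact (WithTop.add_le_add_iff_right (by simp : (1:ℕ∞) ≠ ⊤)).mp h4
      have hnk : (Gx G x).edist b t ≤ (n : ℕ∞) := by
        have h2 := hkt1.trans hn
        rw [show ((n + 1 : ℕ) : ℕ∞) = (n : ℕ∞) + 1 by push_cast; ring] at h2
        exact (WithTop.add_le_add_iff_right (by simp : (1:ℕ∞) ≠ ⊤)).mp h2
      obtain ⟨ℓ, v, hcp⟩ := ih b hb hnk hxk
      exact ⟨ℓ + 1, _, isCorrPath_cons h.1 (fun _ => hfw) hcp⟩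

lemma exists_Gx_walk :
    ∀ {a b : V} (q : G.Walk a b), x ∉ q.support →
      ∃ q' : (Gx G x).Walk a b, q'.length = q.length := by
  intro a b q
  induction q with
  | nil => exact fun _ => ⟨SimpleGraph.Walk.nil, rfl⟩
  | @cons u c w h r ih =>
    intro hx
    rw [SimpleGraph.Walk.support_cons] at hx
    simp only [List.mem_cons, not_or] at hx
    obtain ⟨hax, hxr⟩ := hx
    have hcx : c ≠ x := fun hc => hxr (hc ▸ r.start_mem_support)
    obtain ⟨q', hq'⟩ := ih hxr
    exact ⟨SimpleGraph.Walk.cons (⟨h, Ne.symm hax, hcx⟩ : (Gx G x).Adj u c) q', congrArg (· + 1) hq'⟩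

lemma betaStar_ne (ht : t ≠ x) :
    betaStar G x t = ((max (G.dist x t - 2) 1 : ℕ) : ℕ∞) := by
  simp [betaStar, Ne.symm ht]

lemma corr_from_x (hG : G.Connected) (ht : t ≠ x) :
    ∃ ℓ v, IsCorrPath G {x} (betaStar G) x t ℓ v := by
  obtain ⟨p, hp, hl⟩ := (hG x t).exists_path_of_dist
  cases p with
  | nil => exact absurd rfl (Ne.symm ht)
  | @cons a b c h q =>
    have hb : b ≠ x := Ne.symm h.ne
    have hxs : x ∉ q.support := by
      have h2 := hp.support_nodup
      rw [SimpleGraph.Walk.support_cons] at h2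
      exact (List.nodup_cons.mp h2).1
    obtain ⟨q', hq'⟩ := exists_Gx_walk q hxs
    have hd1 : (Gx G x).edist b t ≤ (q.length : ℕ∞) := hq' ▸ SimpleGraph.edist_le q'
    have hlen : q.length + 1 = G.dist x t := by
      rw [← hl, SimpleGraph.Walk.length_cons]
    have hx2 : (Gx G x).edist b t ≤ G.edist b x + betaStar G x t := by
      have h1 : G.edist b x = 1 := SimpleGraph.edist_eq_one_iff_adj.mpr h.symm
      rw [h1, betaStar_ne ht]
      refine hd1.trans ?_
      have : q.length ≤ 1 + max (G.dist x t - 2) 1 := by omega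
      exact_mod_cast Nat.cast_le.mpr this
    obtain ⟨ℓ, v, hcp⟩ := corr_of_Gx hG q.length b hb hd1 hx2
    exact ⟨ℓ + 1, _, isCorrPath_cons h
      (fun hc => absurd (Finset.mem_singleton_self x) hc) hcp⟩

lemma corr_honest (hG : G.Connected) :
    ∀ n : ℕ, ∀ i : V, i ≠ t → gfun G x (betaStar G) t i ≤ (n : ℕ∞) →
      ∃ ℓ v, IsCorrPath G {x} (betaStar G) i t ℓ v := by
  intro n
  induction n using Nat.strong_induction_on with
  | _ n ih =>
    intro i hit hn
    by_cases hi : i = x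
    · subst hi
      exact corr_from_x hG (Ne.symm hit)
    have hpos : 1 ≤ gfun G x (betaStar G) t i := by
      rw [gfun_honest hi]
      refine le_min ?_ ?_
      · exact Order.one_le_iff_pos.mpr (SimpleGraph.edist_pos_of_ne hit)
      · by_cases htx : t = x
        · refine le_add_right ?_
          exact Order.one_le_iff_pos.mpr (SimpleGraph.edist_pos_of_ne hi)
        · refine le_add_left ?_
          rw [betaStar_ne htx]
          exact_mod_cast Nat.cast_le.mpr (le_max_right _ 1)
    by_cases hcase : (Gx G x).edist i t ≤ G.edist i x + betaStar G x t
    · refine corr_of_Gx hG n i hi ?_ hcase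
      rwa [gfun_honest hi, min_eq_left hcase] at hn
    · push_neg at hcase
      have hgi : gfun G x (betaStar G) t i = G.edist i x + betaStar G x t := by
        rw [gfun_honest hi]; exact min_eq_right hcase.le
      obtain ⟨p, hp, hl⟩ := (hG i x).exists_path_of_dist
      cases p with
      | nil => exact absurd rfl hi
      | @cons a b c h q =>
        have hq : G.edist b x ≤ (q.length : ℕ∞) := SimpleGraph.edist_le q
        have hlen : (q.length : ℕ∞) + 1 = G.edist i x := by
          rw [edist_eq_coe_dist (hG i x), ← hl, SimpleGraph.Walk.length_cons]
          push_cast; ring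
        have hgb : gfun G x (betaStar G) t b ≤ G.edist b x + betaStar G x t := by
          by_cases hbx : b = x
          · subst hbx; rw [gfun_x, SimpleGraph.edist_self, zero_add]
          · rw [gfun_honest hbx]; exact min_le_right _ _
        have hstep : gfun G x (betaStar G) t b + 1 ≤ gfun G x (betaStar G) t i := by
          calc gfun G x (betaStar G) t b + 1
              ≤ (G.edist b x + betaStar G x t) + 1 := add_le_add_left hgb 1
            _ ≤ ((q.length : ℕ∞) + betaStar G x t) + 1 :=
                add_le_add_left (add_le_add_left hq _) 1
            _ = ((q.length : ℕ∞) + 1) + betaStar G x t := by ring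
            _ = G.edist i x + betaStar G x t := by rw [hlen]
            _ = gfun G x (betaStar G) t i := hgi.symm
        have hfw := forward_of_succ_le hG hi hit h hstep
        by_cases hbt : b = t
        · refine ⟨1, fun n => Nat.casesOn n i (fun _ => b), rfl, hbt, ?_, ?_⟩
          · intro j hj
            interval_cases j
            exact h
          · intro j hj _
            interval_cases j
            exact hfw
        · have hn1 : 1 ≤ n := by exact_mod_cast hpos.trans hn
          obtain ⟨m, rfl⟩ : ∃ m, n = m + 1 := ⟨n - 1, by omega⟩
          have hm : gfun G x (betaStar G) t b ≤ (m : ℕ∞) := by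
            have h2 := hstep.trans hn
            rw [show ((m + 1 : ℕ) : ℕ∞) = (m : ℕ∞) + 1 by push_cast; ring] at h2
            exact (WithTop.add_le_add_iff_right (by simp : (1:ℕ∞) ≠ ⊤)).mp h2
          obtain ⟨ℓ, v, hcp⟩ := ih m (by omega) b hbt hm
          exact ⟨ℓ + 1, _, isCorrPath_cons h (fun _ => hfw) hcp⟩

lemma admissible_betaStar (hG : G.Connected) : Admissible G {x} (betaStar G) := by
  intro s t hst
  by_cases hs : s = x
  · subst hs
    exact corr_from_x hG (Ne.symm hst)
  · have hfin : gfun G x (betaStar G) t s ≠ ⊤ := by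
      rw [gfun_honest hs]
      refine ne_top_of_le_ne_top ?_ (min_le_right _ _)
      refine WithTop.add_ne_top.mpr ⟨SimpleGraph.edist_ne_top_iff_reachable.mpr (hG s x), ?_⟩
      by_cases htx : t = x
      · subst htx; simp [betaStar]; exact WithTop.zero_ne_top
      · rw [betaStar_ne htx]; exact ENat.coe_ne_top _
    obtain ⟨m, hm⟩ := WithTop.ne_top_iff_exists.mp hfin
    exact corr_honest hG m s hst (le_of_eq hm.symm)

lemma optimal (hG : G.Connected)
    (hβ1 : ∀ t : V, t ≠ x → 1 ≤ β x t)
    (hadm : Admissible G {x} β) (ht : t ≠ x) :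
    ((max (G.dist x t - 2) 1 : ℕ) : ℕ∞) ≤ β x t := by
  by_contra hcon
  push_neg at hcon
  set d := G.dist x t with hd
  have hbne : β x t ≠ ⊤ := ne_top_of_lt hcon
  obtain ⟨m, hm⟩ := WithTop.ne_top_iff_exists.mp hbne
  have hm1 : 1 ≤ m := by
    have h2 := hβ1 t ht
    rw [← hm] at h2
    exact Nat.one_le_cast.mp h2
  have hmlt : m < max (d - 2) 1 := by
    rw [← hm] at hcon
    exact Nat.cast_lt.mp hcon
  have hd4 : m + 2 < d := by omega
  obtain ⟨ℓ, v, h0, hl, hadj, hfw⟩ := hadm x t (Ne.symm ht)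
  have key : ∀ i ≤ ℓ, G.edist x (v i) ≤ 1 := by
    intro i
    induction i with
    | zero => intro _; rw [h0, SimpleGraph.edist_self]; exact zero_le
    | succ j ihj =>
      intro hj1
      have hj : j < ℓ := by omega
      have hjle := ihj (by omega)
      have hadjj := hadj j hj
      by_cases hvj : v j = x
      · exact le_of_eq (SimpleGraph.edist_eq_one_iff_adj.mpr (hvj ▸ hadjj))
      · have hmem : v j ∉ ({x} : Finset V) := by simp [hvj]
        obtain ⟨hnet, hadjk, hmin⟩ := hfw j hj hmem
        have h1 : G.edist x (v j) = 1 :=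
          le_antisymm hjle
            (Order.one_le_iff_pos.mpr (SimpleGraph.edist_pos_of_ne (fun hh => hvj hh.symm)))
        have hadjx : G.Adj (v j) x := (SimpleGraph.edist_eq_one_iff_adj.mp h1).symm
        have hle := hmin x hadjx
        rw [rho_eq hG, rho_eq hG, gfun_x, ← hm] at hle
        by_cases hvj1 : v (j + 1) = x
        · rw [hvj1, SimpleGraph.edist_self]; exact zero_le
        · exfalso
          rw [gfun_honest hvj1, ← hm] at hle
          have hd2 : G.edist x (v (j + 1)) ≤ 2 :=
            calc G.edist x (v (j + 1)) ≤ G.edist x (v j) + G.edist (v j) (v (j + 1)) :=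
                  SimpleGraph.edist_triangle
              _ ≤ 1 + 1 := add_le_add hjle
                  (le_of_eq (SimpleGraph.edist_eq_one_iff_adj.mpr hadjj))
              _ = 2 := by norm_num
          have hA : (m : ℕ∞) + 1 ≤ (Gx G x).edist (v (j + 1)) t := by
            refine le_trans ?_ (SimpleGraph.edist_anti (fun _ _ hh => hh.1))
            have htri : (d : ℕ∞) ≤ 2 + G.edist (v (j + 1)) t := by
              calc (d : ℕ∞) = G.edist x t := (edist_eq_coe_dist (hG x t)).symm
                _ ≤ G.edist x (v (j + 1)) + G.edist (v (j + 1)) t := SimpleGraph.edist_triangle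
                _ ≤ 2 + G.edist (v (j + 1)) t := add_le_add_left hd2 _
            have hc : ((m + 3 : ℕ) : ℕ∞) ≤ 2 + G.edist (v (j + 1)) t :=
              le_trans (Nat.cast_le.mpr (by omega)) htri
            rw [show ((m + 3 : ℕ) : ℕ∞) = 2 + ((m : ℕ∞) + 1) by push_cast; ring] at hc
            exact (WithTop.add_le_add_iff_left (by simp : (2:ℕ∞) ≠ ⊤)).mp hc
          have hB : (m : ℕ∞) + 1 ≤ G.edist (v (j + 1)) x + (m : ℕ∞) := by
            have h2 : (1 : ℕ∞) ≤ G.edist (v (j + 1)) x :=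
              Order.one_le_iff_pos.mpr (SimpleGraph.edist_pos_of_ne hvj1)
            calc (m : ℕ∞) + 1 = 1 + (m : ℕ∞) := by ring
              _ ≤ G.edist (v (j + 1)) x + (m : ℕ∞) := add_le_add_left h2 _
          have hfin := (le_min hA hB).trans hle
          have hfin2 : ((m + 1 : ℕ) : ℕ∞) ≤ ((m : ℕ) : ℕ∞) := by push_cast; exact hfin
          have := Nat.cast_le.mp hfin2
          omega
  have hfin := key ℓ le_rfl
  rw [hl, edist_eq_coe_dist (hG x t)] at hfin
  have : d ≤ 1 := by exact_mod_cast hfin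
  omega

end Aux

/-- For a single colluding agent `x`: (a) the broadcast
`β*(x,t) = max (d(x,t) - 2) 1` is admissible, and (b) every admissible broadcast `β`
for `{x}` satisfies `β x t ≥ max (d(x,t) - 2) 1` for every `t ≠ x`; so `β*` is the
pointwise minimal (optimal) admissible strategy for a single lying agent. -/
theorem single_agent_optimal [Fintype V] [DecidableEq V] (G : SimpleGraph V)
    (hG : G.Connected) (hn : 2 ≤ Fintype.card V) (x : V) :
    Admissible G {x} (betaStar G) ∧
      ∀ β : V → V → ℕ∞, β x x = 0 → (∀ t : V, t ≠ x → 1 ≤ β x t) →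
        Admissible G {x} β →
        ∀ t : V, t ≠ x → ((max (G.dist x t - 2) 1 : ℕ) : ℕ∞) ≤ β x t := by
  constructor
  · exact admissible_betaStar hG
  · intro β hβ0 hβ1 hadm t ht
    exact optimal hG hβ1 hadm ht


end Intercept
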